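/- The Ellentuck topology on Sub(X) is finer than the slice topology: every set of the form {Y ∈ Sub(X) : Y ∩ U ≠ ∅} with U open in X, and every set of the form {Y ∈ Sub(X) : dist(Y,C) > 0} with C a nonempty bounded closed convex subset of X, is open in the Ellentuck topology. -/

import Mathlib

/-- The set of closed linear subspaces of a normed space. -/
def ClosedSub (E : Type) [NormedAddCommGroup E] [NormedSpace ℝ E] :=
  {Y : Submodule ℝ E // IsClosed (Y : Set E)}

/-- The basic set `[F, Y]_ε` of the Ellentuck topology: the set of closed subspaces `Z`
for which there exist a closed subspace `Z'` with `F ⊆ Z' ⊆ Y` and an isomorphism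
`T : Z' → Z` with `‖T - Id_{Z'}‖ < ε`. -/
def ellSet (E : Type) [NormedAddCommGroup E] [NormedSpace ℝ E]
    (F Y : Submodule ℝ E) (ε : ℝ) : Set (ClosedSub E) :=
  {Z | ∃ Z' : Submodule ℝ E, IsClosed (Z' : Set E) ∧ F ≤ Z' ∧ Z' ≤ Y ∧
    ∃ T : ↥Z' ≃L[ℝ] ↥Z.1,
      ‖Z.1.subtypeL.comp (T : ↥Z' →L[ℝ] ↥Z.1) - Z'.subtypeL‖ < ε}

/-- The collection of all basic sets `[F, Y]_ε` with `F` finite-dimensional,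
`Y` closed with `F ⊆ Y`, and `ε > 0`. -/
def ellBasis (E : Type) [NormedAddCommGroup E] [NormedSpace ℝ E] :
    Set (Set (ClosedSub E)) :=
  {S | ∃ (F Y : Submodule ℝ E) (ε : ℝ), FiniteDimensional ℝ F ∧ IsClosed (Y : Set E) ∧
    F ≤ Y ∧ 0 < ε ∧ S = ellSet E F Y ε}

/-- The Ellentuck topology on `Sub(E)`, generated by the sets `[F, Y]_ε`. -/
def ellTop (E : Type) [NormedAddCommGroup E] [NormedSpace ℝ E] :
    TopologicalSpace (ClosedSub E) :=
  TopologicalSpace.generateFrom (ellBasis E)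

lemma isOpen_gen {α : Type*} {B : Set (Set α)} {S : Set α}
    (h : ∀ x ∈ S, ∃ b ∈ B, x ∈ b ∧ b ⊆ S) :
    @IsOpen _ (TopologicalSpace.generateFrom B) S := by
  have hS : S = ⋃₀ {b | b ∈ B ∧ b ⊆ S} := by
    apply Set.Subset.antisymm
    · intro x hx
      obtain ⟨b, hbB, hxb, hbS⟩ := h x hx
      exact ⟨b, ⟨hbB, hbS⟩, hxb⟩
    · rintro x ⟨b, ⟨_, hbS⟩, hxb⟩
      exact hbS hxb
  rw [hS]
  exact TopologicalSpace.GenerateOpen.sUnion _ fun b hb => .basic _ hb.1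

set_option maxHeartbeats 800000 in
set_option synthInstance.maxHeartbeats 400000 in
/-- Every closed subspace `Y` belongs to each basic set `[F, Y]_ε` around it. -/
lemma mem_ellSet_self (E : Type) [NormedAddCommGroup E] [NormedSpace ℝ E]
    (Y : ClosedSub E) (F : Submodule ℝ E) (hF : F ≤ Y.1) {ε : ℝ} (hε : 0 < ε) :
    Y ∈ ellSet E F Y.1 ε := by
  refine ⟨Y.1, Y.2, hF, le_rfl, ContinuousLinearEquiv.refl ℝ ↥Y.1, ?_⟩
  rw [ContinuousLinearEquiv.coe_refl, ContinuousLinearMap.comp_id, sub_self]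
  exact (norm_zero (E := ↥Y.1 →L[ℝ] E)).trans_lt hε

set_option maxHeartbeats 800000 in
/-- the Ellentuck topology is finer than the slice topology: the subbasic
sets of the slice topology — `{Y : Y ∩ U ≠ ∅}` for `U` open, and
`{Y : dist(Y, C) > 0}` for `C` nonempty bounded closed convex — are Ellentuck-open. -/
theorem statement4 (E : Type) [NormedAddCommGroup E] [NormedSpace ℝ E] [CompleteSpace E] :
    (∀ U : Set E, IsOpen U →
      @IsOpen _ (ellTop E) {Y : ClosedSub E | ((Y.1 : Set E) ∩ U).Nonempty}) ∧
    (∀ C : Set E, C.Nonempty → Bornology.IsBounded C → IsClosed C → Convex ℝ C →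
      @IsOpen _ (ellTop E)
        {Y : ClosedSub E | ∃ r > (0 : ℝ), ∀ x ∈ C, ∀ y ∈ (Y.1 : Set E), r ≤ ‖x - y‖}) := by
  constructor
  · intro U hU
    apply isOpen_gen
    rintro Y ⟨y, hyY, hyU⟩
    obtain ⟨δ, hδ, hball⟩ := Metric.isOpen_iff.1 hU y hyU
    have hy1 : (0:ℝ) < ‖y‖ + 1 := by positivity
    set ε : ℝ := δ / (‖y‖ + 1) with hεdef
    have hε : 0 < ε := div_pos hδ hy1
    have hsp : Submodule.span ℝ {y} ≤ Y.1 :=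
      Submodule.span_le.2 (Set.singleton_subset_iff.2 hyY)
    refine ⟨ellSet E (Submodule.span ℝ {y}) Y.1 ε,
      ⟨Submodule.span ℝ {y}, Y.1, ε, inferInstance, Y.2, hsp, hε, rfl⟩,
      mem_ellSet_self E Y _ hsp hε, ?_⟩
    rintro Z ⟨Z', hZ'c, hFZ', hZ'Y, T, hT⟩
    have hyZ' : y ∈ Z' := hFZ' (Submodule.mem_span_singleton_self y)
    set v : ↥Z' := ⟨y, hyZ'⟩ with hv
    set p : E := ((T v : ↥Z.1) : E) with hp
    have hpZ : p ∈ Z.1 := (T v).2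
    have hop : (Z.1.subtypeL.comp (T : ↥Z' →L[ℝ] ↥Z.1) - Z'.subtypeL) v = p - y := by
      simp [hp]
      rfl
    have hnorm : ‖p - y‖ ≤ ε * ‖y‖ := by
      rw [← hop]
      calc ‖(Z.1.subtypeL.comp (T : ↥Z' →L[ℝ] ↥Z.1) - Z'.subtypeL) v‖
          ≤ ‖Z.1.subtypeL.comp (T : ↥Z' →L[ℝ] ↥Z.1) - Z'.subtypeL‖ * ‖v‖ :=
            ContinuousLinearMap.le_opNorm _ _
        _ ≤ ε * ‖v‖ := by
            apply mul_le_mul_of_nonneg_right hT.le (norm_nonneg _)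
        _ = ε * ‖y‖ := rfl
    have hlt : ε * ‖y‖ < δ := by
      have : ε * (‖y‖ + 1) = δ := div_mul_cancel₀ δ (ne_of_gt hy1)
      nlinarith
    refine ⟨p, hpZ, hball ?_⟩
    rw [Metric.mem_ball, dist_eq_norm]
    exact lt_of_le_of_lt hnorm hlt
  · intro C hCne hCb _ _
    apply isOpen_gen
    rintro Y ⟨r, hr, hrC⟩
    obtain ⟨M, hM⟩ := hCb.exists_norm_le
    set M' : ℝ := max M 0 with hM'
    have hM'0 : 0 ≤ M' := le_max_right _ _
    have hMle : ∀ x ∈ C, ‖x‖ ≤ M' := fun x hx => (hM x hx).trans (le_max_left _ _)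
    set K : ℝ := M' + r + 1 with hK
    have hK1 : 1 ≤ K := by nlinarith
    have hK0 : 0 < K := by linarith
    set ε : ℝ := min r 1 / (2 * K) with hεdef
    have hminpos : 0 < min r 1 := lt_min hr one_pos
    have hε : 0 < ε := div_pos hminpos (by linarith)
    have hεK : ε * K = min r 1 / 2 := by
      field_simp [hεdef]
      rw [hεdef]
      field_simp
    clear_value M'
    have hεhalf : ε ≤ 1 / 2 := by
      have h1 : min r 1 ≤ 1 := min_le_right _ _
      rw [hεdef, div_le_div_iff₀ (by linarith) (by norm_num)]
      nlinarith
    clear_value K ε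
    refine ⟨ellSet E ⊥ Y.1 ε,
      ⟨⊥, Y.1, ε, inferInstance, Y.2, bot_le, hε, rfl⟩,
      mem_ellSet_self E Y ⊥ bot_le hε, ?_⟩
    rintro Z ⟨Z', hZ'c, _, hZ'Y, T, hT⟩
    refine ⟨r / 2, by linarith, ?_⟩
    intro x hx z hz
    set w : ↥Z' := T.symm ⟨z, hz⟩ with hw
    have hwY : (w : E) ∈ Y.1 := hZ'Y w.2
    have hrw : r ≤ ‖x - (w : E)‖ := hrC x hx _ hwY
    have hxM : ‖x‖ ≤ M' := hMle x hx
    have hop : (Z.1.subtypeL.comp (T : ↥Z' →L[ℝ] ↥Z.1) - Z'.subtypeL) w = z - (w : E) := by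
      simp [hw]
    have hnorm : ‖z - (w : E)‖ ≤ ε * ‖(w : E)‖ := by
      rw [← hop]
      calc ‖(Z.1.subtypeL.comp (T : ↥Z' →L[ℝ] ↥Z.1) - Z'.subtypeL) w‖
          ≤ ‖Z.1.subtypeL.comp (T : ↥Z' →L[ℝ] ↥Z.1) - Z'.subtypeL‖ * ‖w‖ :=
            ContinuousLinearMap.le_opNorm _ _
        _ ≤ ε * ‖w‖ := mul_le_mul_of_nonneg_right hT.le (norm_nonneg _)
        _ = ε * ‖(w : E)‖ := rfl
    by_cases hcase : ‖(w : E)‖ ≤ K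
    · have h1 : ε * ‖(w : E)‖ ≤ ε * K := mul_le_mul_of_nonneg_left hcase hε.le
      have h2 : ‖x - (w : E)‖ - ‖z - (w : E)‖ ≤ ‖x - z‖ := by
        have := norm_sub_le_norm_sub_add_norm_sub x (w : E) z
        have h3 : ‖x - z‖ + ‖z - (w:E)‖ ≥ ‖x - (w:E)‖ := by
          calc ‖x - (w:E)‖ = ‖(x - z) + (z - (w:E))‖ := by rw [sub_add_sub_cancel]
            _ ≤ ‖x - z‖ + ‖z - (w:E)‖ := norm_add_le _ _
        linarith
      have hmin : min r 1 ≤ r := min_le_left _ _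
      nlinarith
    · push_neg at hcase
      have h1 : ‖(w : E)‖ - ‖z - (w : E)‖ ≤ ‖z‖ := by
        have : ‖(w:E)‖ = ‖z - (z - (w:E))‖ := by rw [sub_sub_cancel]
        have h2 : ‖z - (z - (w:E))‖ ≤ ‖z‖ + ‖z - (w:E)‖ := norm_sub_le _ _
        linarith
      have h2 : ‖z‖ - ‖x‖ ≤ ‖x - z‖ := by
        have : ‖z‖ = ‖x - (x - z)‖ := by rw [sub_sub_cancel]
        have h3 : ‖x - (x - z)‖ ≤ ‖x‖ + ‖x - z‖ := norm_sub_le _ _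
        linarith
      have h6 : K - ε * K ≤ ‖(w:E)‖ - ε * ‖(w:E)‖ := by nlinarith
      have hmin1 : min r 1 ≤ 1 := min_le_right _ _
      linarith
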